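/- Let (Ω, P) be a probability space, α ∈ (0, 1), and X an integrable real random variable. Suppose q ∈ ℝ satisfies P(X < q) = α and P(X = q) = 0 (so that P(X ≥ q) = 1 − α > 0). Then the tail conditional expectation equals the Rockafellar–Uryasev infimum: E[X | X ≥ q] = inf over c ∈ ℝ of (c + (1 − α)⁻¹ · E[max(X − c, 0)]), and moreover the infimum is attained at c = q, i.e. E[X | X ≥ q] = q + (1 − α)⁻¹ · E[max(X − q, 0)]. -/

import Mathlib

open MeasureTheory

/-- The conditional value at risk at level `α` (Rockafellar–Uryasev formulation):
`CVaR_α(X) = inf_{c ∈ ℝ} (c + (1 - α)⁻¹ E[max (X - c) 0])`. -/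
noncomputable def cvar {Ω : Type*} [MeasurableSpace Ω] (P : Measure Ω) (α : ℝ)
    (X : Ω → ℝ) : ℝ :=
  ⨅ c : ℝ, c + (1 - α)⁻¹ * ∫ ω, max (X ω - c) 0 ∂P

/-- If `q` is a continuity point with `P(X < q) = α` and `P(X = q) = 0`, then the tail
conditional expectation `E[X | X ≥ q]` equals the Rockafellar–Uryasev infimum, and the
infimum is attained at `c = q`. -/
theorem tail_condExp_eq_cvar {Ω : Type*} [MeasurableSpace Ω] (P : Measure Ω)
    [IsProbabilityMeasure P] (α : ℝ) (hα₀ : 0 < α) (hα₁ : α < 1)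
    (X : Ω → ℝ) (hXm : Measurable X) (hX : Integrable X P)
    (q : ℝ) (hq_lt : P {ω | X ω < q} = ENNReal.ofReal α)
    (hq_eq : P {ω | X ω = q} = 0) :
    (∫ ω in {ω | q ≤ X ω}, X ω ∂P) / (P {ω | q ≤ X ω}).toReal = cvar P α X ∧
      (∫ ω in {ω | q ≤ X ω}, X ω ∂P) / (P {ω | q ≤ X ω}).toReal =
        q + (1 - α)⁻¹ * ∫ ω, max (X ω - q) 0 ∂P := by
  set A : Set Ω := {ω | q ≤ X ω} with hA
  have hAm : MeasurableSet A := measurableSet_le measurable_const hXm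
  have hAc : A = {ω | X ω < q}ᶜ := by
    ext ω; simp [hA, not_lt]
  have hμA : P A = ENNReal.ofReal (1 - α) := by
    rw [hAc, measure_compl (measurableSet_lt hXm measurable_const) (measure_ne_top P _),
      hq_lt, measure_univ, ← ENNReal.ofReal_one, ← ENNReal.ofReal_sub _ hα₀.le]
  have h1α : (0:ℝ) < 1 - α := by linarith
  have hμAr : (P A).toReal = 1 - α := by
    rw [hμA, ENNReal.toReal_ofReal h1α.le]
  -- integrability of positive parts
  have hI : ∀ c : ℝ, Integrable (fun ω => max (X ω - c) 0) P := fun c =>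
    (hX.sub (integrable_const c)).pos_part
  -- the key integral identity at q
  have hind : (fun ω => max (X ω - q) 0) = A.indicator (fun ω => X ω - q) := by
    funext ω
    rw [Set.indicator_apply]
    split_ifs with h
    · exact max_eq_left (by simp only [hA, Set.mem_setOf_eq] at h; linarith)
    · exact max_eq_right (by simp only [hA, Set.mem_setOf_eq, not_le] at h; linarith)
  have hint_q : ∫ ω, max (X ω - q) 0 ∂P = (∫ ω in A, X ω ∂P) - q * (1 - α) := by
    rw [hind, integral_indicator hAm,
      integral_sub hX.integrableOn (integrableOn_const (measure_ne_top P A)),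
      setIntegral_const, measureReal_def, hμAr, smul_eq_mul, mul_comm]
  have h2 : (∫ ω in A, X ω ∂P) / (P A).toReal =
      q + (1 - α)⁻¹ * ∫ ω, max (X ω - q) 0 ∂P := by
    rw [hint_q, hμAr]
    field_simp
    ring
  refine ⟨?_, h2⟩
  rw [h2]
  -- now show the infimum is attained at q
  have hlb : ∀ c : ℝ, q + (1 - α)⁻¹ * (∫ ω, max (X ω - q) 0 ∂P)
      ≤ c + (1 - α)⁻¹ * ∫ ω, max (X ω - c) 0 ∂P := by
    intro c
    have hindic : Integrable (A.indicator fun _ => q - c) P :=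
      (integrable_const (q - c)).indicator hAm
    have hpt : ∀ ω, max (X ω - q) 0 + A.indicator (fun _ => q - c) ω ≤ max (X ω - c) 0 := by
      intro ω
      by_cases h : ω ∈ A
      · have hq' : q ≤ X ω := h
        rw [Set.indicator_of_mem h, max_eq_left (by linarith)]
        have : X ω - q + (q - c) = X ω - c := by ring
        rw [this]
        exact le_max_left _ _
      · have hq' : X ω < q := by simpa [hA, not_le] using h
        rw [Set.indicator_of_notMem h, max_eq_right (by linarith), add_zero]
        exact le_max_right _ _
    have hIineq : (∫ ω, max (X ω - q) 0 ∂P) + (q - c) * (1 - α)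
        ≤ ∫ ω, max (X ω - c) 0 ∂P := by
      have := integral_mono ((hI q).add hindic) (hI c) hpt
      simp only [Pi.add_apply] at this
      rwa [integral_add (hI q) hindic, integral_indicator_const _ hAm, measureReal_def, hμAr,
        smul_eq_mul, mul_comm] at this
    have hk : (1 - α)⁻¹ * (1 - α) = 1 := inv_mul_cancel₀ h1α.ne'
    have hknn : (0:ℝ) ≤ (1 - α)⁻¹ := by positivity
    have h4 := mul_le_mul_of_nonneg_left hIineq hknn
    rw [mul_add] at h4
    have h5 : (1 - α)⁻¹ * ((q - c) * (1 - α)) = q - c := by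
      rw [mul_comm (q - c), ← mul_assoc, hk, one_mul]
    linarith
  have hbdd : BddBelow (Set.range fun c : ℝ => c + (1 - α)⁻¹ * ∫ ω, max (X ω - c) 0 ∂P) := by
    refine ⟨q + (1 - α)⁻¹ * ∫ ω, max (X ω - q) 0 ∂P, ?_⟩
    rintro _ ⟨c, rfl⟩
    exact hlb c
  exact le_antisymm (le_ciInf hlb) (ciInf_le hbdd q)
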